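/- Let G be an m-uniform hypergraph and x ∈ C^n a vector with all entries nonzero of the form x_i = e^{2πi·α_i/m} with α_i integers. Then L(G)x^{m-1} = 0 if and only if for every edge e of G, the sum ∑_{j∈e} α_j ≡ 0 (mod m). -/

import Mathlib

open Complex Finset

noncomputable def zc (m : ℕ) (k : ℤ) : ℂ := Complex.exp (2 * Real.pi * Complex.I * k / m)

lemma zc_add (m : ℕ) (k l : ℤ) : zc m (k + l) = zc m k * zc m l := by
  rw [zc, zc, zc, ← Complex.exp_add]
  congr 1
  push_cast
  ring

lemma abs_zc (m : ℕ) (k : ℤ) : ‖zc m k‖ = 1 := by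
  rw [zc, show (2 * Real.pi * Complex.I * k / m)
      = ((2 * Real.pi * k / m : ℝ) : ℂ) * Complex.I by push_cast; ring]
  exact Complex.norm_exp_ofReal_mul_I _

lemma zc_ne_zero (m : ℕ) (k : ℤ) : zc m k ≠ 0 := Complex.exp_ne_zero _

lemma zc_pow (m : ℕ) (k : ℤ) (p : ℕ) : zc m k ^ p = zc m (p * k) := by
  rw [zc, zc, ← Complex.exp_nat_mul]
  congr 1
  push_cast
  ring

lemma zc_eq_one_iff (m : ℕ) (hm : 0 < m) (k : ℤ) : zc m k = 1 ↔ (m : ℤ) ∣ k := by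
  have hm' : (m : ℂ) ≠ 0 := Nat.cast_ne_zero.mpr hm.ne'
  rw [zc, Complex.exp_eq_one_iff]
  constructor
  · rintro ⟨t, ht⟩
    have h2 : (2 : ℂ) * Real.pi * Complex.I ≠ 0 := by
      simp [Real.pi_ne_zero, Complex.I_ne_zero]
    have ht' : (2 * Real.pi * Complex.I) * (k : ℂ)
        = (2 * Real.pi * Complex.I) * ((t : ℂ) * m) := by
      field_simp at ht
      linear_combination (2 * Real.pi * Complex.I) * ht
    have hk : (k : ℂ) = (t : ℂ) * m := mul_left_cancel₀ h2 ht'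
    have hk' : k = t * m := by exact_mod_cast hk
    exact ⟨t, by linarith⟩
  · rintro ⟨t, rfl⟩
    refine ⟨t, ?_⟩
    field_simp
    simp

lemma prod_zc {ι : Type*} (m : ℕ) (s : Finset ι) (f : ι → ℤ) :
    ∏ j ∈ s, zc m (f j) = zc m (∑ j ∈ s, f j) := by
  simp only [zc]
  rw [← Complex.exp_sum]
  congr 1
  push_cast
  rw [Finset.mul_sum, Finset.sum_div]

private lemma sum_units_eq_card {β : Type*} (F : Finset β) (f : β → ℂ)
    (h1 : ∀ a ∈ F, ‖f a‖ = 1)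
    (h : ∑ a ∈ F, f a = (F.card : ℂ)) :
    ∀ a ∈ F, f a = 1 := by
  have hre : ∀ a ∈ F, (f a).re = 1 := by
    have hsum : ∑ a ∈ F, (f a).re = (F.card : ℝ) := by
      have := congrArg Complex.re h
      simpa using this
    have hle : ∀ a ∈ F, (f a).re ≤ 1 := fun a ha => by
      have h2 := Complex.abs_re_le_norm (f a)
      rw [h1 a ha] at h2
      exact (abs_le.mp h2).2
    have heq : ∑ a ∈ F, (f a).re = ∑ a ∈ F, (1:ℝ) := by simp [hsum]
    exact fun a ha => (Finset.sum_eq_sum_iff_of_le hle).mp heq a ha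
  intro a ha
  have him : (f a).im = 0 := by
    have h2 : (f a).re ^ 2 + (f a).im ^ 2 = 1 := by
      have h3 := Complex.sq_norm (f a)
      rw [h1 a ha, Complex.normSq_apply] at h3
      nlinarith
    nlinarith [hre a ha]
  exact Complex.ext (hre a ha) him

/-- For an m-uniform hypergraph `G` and a vector `x` with
`x i = exp(2πi·α_i/m)` (`α_i` integers), the Laplacian eigen-equation
`L(G)x^{m-1} = 0`, which at vertex `i` reads
`deg(i)·x_i^{m-1} = ∑_{e ∋ i} ∏_{j ∈ e, j ≠ i} x_j`, holds iff for every edge `e`,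
`∑_{j ∈ e} α_j ≡ 0 (mod m)`. -/
theorem first_laplacian_eigenvector_characterization
    (m n : ℕ) (hm : 0 < m) (E : Finset (Finset (Fin n))) (hU : ∀ e ∈ E, e.card = m)
    (α : Fin n → ℤ) (x : Fin n → ℂ)
    (hx : ∀ i, x i = Complex.exp (2 * Real.pi * Complex.I * (α i) / m)) :
    (∀ i : Fin n, ((E.filter (fun e => i ∈ e)).card : ℂ) * x i ^ (m - 1) =
        ∑ e ∈ E.filter (fun e => i ∈ e), ∏ j ∈ e.erase i, x j) ↔
      ∀ e ∈ E, (m : ℤ) ∣ ∑ j ∈ e, α j := by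
  have hx' : ∀ i, x i = zc m (α i) := hx
  -- transformed per-vertex equation
  have key : ∀ i : Fin n,
      (((E.filter (fun e => i ∈ e)).card : ℂ) * x i ^ (m - 1) =
        ∑ e ∈ E.filter (fun e => i ∈ e), ∏ j ∈ e.erase i, x j)
      ↔ (((E.filter (fun e => i ∈ e)).card : ℂ) =
        ∑ e ∈ E.filter (fun e => i ∈ e), zc m (∑ j ∈ e, α j)) := by
    intro i
    have hone : zc m (α i) * zc m (((m - 1 : ℕ) : ℤ) * α i) = 1 := by
      rw [← zc_add]
      apply (zc_eq_one_iff m hm _).mpr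
      refine ⟨α i, ?_⟩
      have hm1 : ((m - 1 : ℕ) : ℤ) = (m : ℤ) - 1 := by
        push_cast [Nat.cast_sub hm]
        ring
      rw [hm1]
      ring
    have hinv : x i ^ (m - 1) = (zc m (α i))⁻¹ := by
      rw [hx', zc_pow]
      exact eq_inv_of_mul_eq_one_right hone
    have hP : ∀ e ∈ E.filter (fun e => i ∈ e),
        ∏ j ∈ e.erase i, x j = zc m (∑ j ∈ e, α j) * (zc m (α i))⁻¹ := by
      intro e he
      rw [Finset.mem_filter] at he
      have h1 : ∏ j ∈ e.erase i, x j = zc m (∑ j ∈ e.erase i, α j) := by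
        rw [Finset.prod_congr rfl fun j _ => hx' j, prod_zc]
      have h2 : zc m (∑ j ∈ e.erase i, α j) * zc m (α i) = zc m (∑ j ∈ e, α j) := by
        rw [← zc_add]
        congr 1
        rw [add_comm]
        exact Finset.add_sum_erase e α he.2
      rw [h1]
      exact (eq_mul_inv_iff_mul_eq₀ (zc_ne_zero m (α i))).mpr h2
    rw [hinv, Finset.sum_congr rfl hP, ← Finset.sum_mul]
    exact (mul_left_injective₀ (inv_ne_zero (zc_ne_zero m (α i)))).eq_iff
  constructor
  · intro h e he
    have hcard : e.card = m := hU e he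
    obtain ⟨i, hi⟩ := Finset.card_pos.mp (hcard ▸ hm)
    have h' := (key i).mp (h i)
    have hmem : e ∈ E.filter (fun e => i ∈ e) := Finset.mem_filter.mpr ⟨he, hi⟩
    have h1 := sum_units_eq_card (E.filter (fun e => i ∈ e))
      (fun e => zc m (∑ j ∈ e, α j)) (fun a _ => abs_zc m _) h'.symm e hmem
    exact (zc_eq_one_iff m hm _).mp h1
  · intro h i
    apply (key i).mpr
    have h1 : ∑ e ∈ E.filter (fun e => i ∈ e), zc m (∑ j ∈ e, α j)
        = ∑ e ∈ E.filter (fun e => i ∈ e), (1 : ℂ) := by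
      apply Finset.sum_congr rfl
      intro e he
      exact (zc_eq_one_iff m hm _).mpr (h e (Finset.mem_filter.mp he).1)
    rw [h1]
    simp
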